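/- arXiv:2106.12031 — 10 statements merged into one kernel-verified Lean document; each statement's English description precedes it below -/
import Mathlib

section
/- Let R be a (possibly nonunital) ring and let R^u = R ⊕ ℤ be its standard unitization with multiplication (x,k)(y,l) = (xy + lx + ky, kl). The monoid (R, ∗) with x ∗ y = x + y + xy is directly finite (i.e., x ∗ y = 0 implies y ∗ x = 0) if and only if R^u is directly finite (i.e., ab = 1 implies ba = 1 for all a, b ∈ R^u). -/
/-- For a possibly nonunital ring `R`, the monoid `(R, ∗)` with
`x ∗ y = x + y + x*y` is directly finite iff the standard unitization
`R ⊕ ℤ` is directly finite. -/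
theorem stmt_1 (R : Type*) [NonUnitalRing R] :
    (∀ x y : R, x + y + x * y = 0 → y + x + y * x = 0) ↔
    (∀ a b : Unitization ℤ R, a * b = 1 → b * a = 1) := by
  constructor
  · intro h a b hab
    have hfst : a.fst * b.fst = 1 := by
      have := congrArg (fun x : Unitization ℤ R => x.fst) hab
      simpa [Unitization.fst_mul] using this
    have hsnd : a.fst • b.snd + b.fst • a.snd + a.snd * b.snd = 0 := by
      have := congrArg (fun x : Unitization ℤ R => x.snd) hab
      simpa [Unitization.snd_mul] using this
    have hcases : (a.fst = 1 ∧ b.fst = 1) ∨ (a.fst = -1 ∧ b.fst = -1) := by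
      rcases Int.isUnit_iff.mp (IsUnit.of_mul_eq_one _ hfst) with h1 | h1 <;>
        rw [h1] at hfst ⊢ <;> [left; right] <;> constructor <;> omega
    refine Unitization.ext ?_ ?_
    · rcases hcases with ⟨ha, hb⟩ | ⟨ha, hb⟩ <;>
        simp [Unitization.fst_mul, ha, hb]
    · simp only [Unitization.snd_mul, Unitization.snd_one]
      rcases hcases with ⟨ha, hb⟩ | ⟨ha, hb⟩
      · rw [ha, hb] at hsnd ⊢
        simp only [one_smul] at hsnd ⊢
        rw [add_comm b.snd a.snd] at hsnd
        have h2 := h _ _ hsnd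
        rw [add_comm a.snd b.snd]
        exact h2
      · rw [ha, hb] at hsnd ⊢
        simp only [neg_smul, one_smul] at hsnd ⊢
        have key : (-a.snd) + (-b.snd) + (-a.snd) * (-b.snd) = 0 := by
          rw [neg_mul_neg, add_comm (-a.snd) (-b.snd)]
          exact hsnd
        have h2 := h _ _ key
        rw [neg_mul_neg] at h2
        rw [add_comm (-a.snd) (-b.snd)]
        exact h2
  · intro h x y hxy
    have hab : ((1 : Unitization ℤ R) + x) * (1 + y) = 1 := by
      refine Unitization.ext ?_ ?_
      · simp [Unitization.fst_mul]
      · simp [Unitization.snd_mul]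
        rw [add_comm y x]
        exact hxy
    have h2 := h _ _ hab
    have h3 := congrArg (fun x : Unitization ℤ R => x.snd) h2
    simp [Unitization.snd_mul] at h3
    rw [add_comm y x]
    exact h3
end

section
/- Let R be a (possibly nonunital) ring with stable range one: for all x, y ∈ R such that 0 ∈ x ∗ R + yR, there is z ∈ R with 0 ∈ (x + yz) ∗ R (where x ∗ r = x + r + xr). Then R is directly finite, i.e., the monoid (R, ∗) is directly finite: x ∗ y = 0 implies y ∗ x = 0. -/
/-- A possibly nonunital ring with stable range one (Vaserstein's nonunital
version, phrased via `x ∗ y = x + y + x*y`) is directly finite in the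
nonunital sense. -/
theorem stmt_4 (R : Type*) [NonUnitalRing R]
    (hsr : ∀ x y : R, (∃ u v : R, (x + u + x * u) + y * v = 0) →
      ∃ z w : R, (x + y * z) + w + (x + y * z) * w = 0) :
    ∀ x y : R, x + y + x * y = 0 → y + x + y * x = 0 := by
  intro x y hxy
  obtain ⟨z, w, h⟩ := hsr y (-(y + x + y * x)) ⟨x, -y, by
    have e : (y + x + y * x) + (-(y + x + y * x)) * (-y)
        = y * (x + y + x * y) + (x + y + x * y) := by noncomm_ring
    rw [e, hxy]; simp⟩
  set t := y + x + y * x with ht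
  set p := y + -t * z with hp
  have hxp : x + p + x * p = 0 := by
    have e : x + p + x * p
        = (x + y + x * y) - ((x + y + x * y) + (x + y + x * y) * x) * z := by
      rw [hp, ht]; noncomm_ring
    rw [e, hxy]; simp
  have hw : w = x := by
    have e1 : (x + p + x * p) + w + (x + p + x * p) * w
        = x + (p + w + p * w) + x * (p + w + p * w) := by noncomm_ring
    rw [hxp, h] at e1
    simpa using e1
  rw [hw] at h
  have hyp : y = p := by
    have e2 : (p + x + p * x) + y + (p + x + p * x) * y
        = p + (x + y + x * y) + p * (x + y + x * y) := by noncomm_ring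
    rw [h, hxy] at e2
    simpa using e2
  have htz : -t * z = 0 := by
    have h' : y + -t * z = y + 0 := by rw [add_zero, ← hp, ← hyp]
    exact add_left_cancel h'
  rw [hp, htz, add_zero] at h
  exact h
end

section
/- Let R be a (possibly nonunital) ring such that every finite subset of R is contained in a corner eRe that is a clean unital ring. Then R is clean in the nonunital sense: for every x ∈ R there exist an idempotent f ∈ R and an element u ∈ R invertible in the monoid (R, ∗) (i.e., there is v with u ∗ v = v ∗ u = 0, where a ∗ b = a + b + ab) such that x = f + u. -/
/-- If every finite subset of a possibly nonunital ring `R` is contained in a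
clean corner `eRe`, then `R` is clean in the nonunital sense: every `x` is the
sum of an idempotent and an element invertible in the monoid `(R, ∗)` with
`a ∗ b = a + b + a*b`. -/
theorem stmt_6 (R : Type*) [NonUnitalRing R]
    (h : ∀ s : Finset R, ∃ e : R, e * e = e ∧ (∀ x ∈ s, e * x * e = x) ∧
      (∀ a : R, e * a * e = a → ∃ f u v : R, f * f = f ∧ e * f * e = f ∧
        e * u * e = u ∧ e * v * e = v ∧ u * v = e ∧ v * u = e ∧ a = u + f)) :
    ∀ x : R, ∃ f u : R, f * f = f ∧
      (∃ v : R, u + v + u * v = 0 ∧ v + u + v * u = 0) ∧ x = f + u := by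
  intro x
  obtain ⟨e, he, hmem, hclean⟩ := h {x}
  have hx : e * x * e = x := hmem x (by simp)
  have hex : e * (e + x) * e = e + x := by
    rw [mul_add, add_mul, hx]
    rw [show e * e * e = e by rw [he, he]]
  obtain ⟨f, u, v, hf, hef, heu, hev, huv, hvu, hsum⟩ := hclean (e + x) hex
  have hue : u * e = u := by
    conv_lhs => rw [← heu]
    rw [mul_assoc, mul_assoc, he, ← mul_assoc]
    exact heu
  have heu' : e * u = u := by
    conv_lhs => rw [← heu]
    rw [← mul_assoc, ← mul_assoc, he]
    exact heu
  have hve : v * e = v := by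
    conv_lhs => rw [← hev]
    rw [mul_assoc, mul_assoc, he, ← mul_assoc]
    exact hev
  have hev' : e * v = v := by
    conv_lhs => rw [← hev]
    rw [← mul_assoc, ← mul_assoc, he]
    exact hev
  refine ⟨f, u - e, hf, ⟨v - e, ?_, ?_⟩, ?_⟩
  · have : (u - e) * (v - e) = e - u - v + e := by
      rw [sub_mul, mul_sub, mul_sub, huv, hue, hev', he]
      abel
    rw [this]; abel
  · have : (v - e) * (u - e) = e - v - u + e := by
      rw [sub_mul, mul_sub, mul_sub, hvu, hve, heu', he]
      abel
    rw [this]; abel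
  · rw [show x = (e + x) - e by abel, hsum]; abel
end

section
/- Let R be a (possibly nonunital) ring such that every finite subset of R is contained in a corner eRe that is an exchange unital ring. Then R is exchange in the nonunital sense: for every x ∈ R there is an idempotent f ∈ xR with f ∈ x ∘ R, where x ∘ y = x + y − xy. -/
/-- If every finite subset of a possibly nonunital ring `R` is contained in an
exchange corner `eRe`, then `R` is exchange in the nonunital sense (Ara):
for every `x` there is an idempotent `f ∈ xR` with `f ∈ x ∘ R`,
where `x ∘ y = x + y - x*y`. -/
theorem stmt_7 (R : Type*) [NonUnitalRing R]
    (h : ∀ s : Finset R, ∃ e : R, e * e = e ∧ (∀ x ∈ s, e * x * e = x) ∧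
      (∀ a : R, e * a * e = a → ∃ f : R, f * f = f ∧
        (∃ r : R, e * r * e = r ∧ f = a * r) ∧
        (∃ t : R, e * t * e = t ∧ e - f = (e - a) * t))) :
    ∀ x : R, ∃ f : R, f * f = f ∧ (∃ r : R, f = x * r) ∧
      (∃ y : R, f = x + y - x * y) := by
  intro x
  obtain ⟨e, he, hxs, hex⟩ := h {x}
  have hx : e * x * e = x := hxs x (Finset.mem_singleton_self x)
  obtain ⟨f, hf, ⟨r, _, hfr⟩, ⟨t, hte, hft⟩⟩ := hex x hx
  have hxe : x * e = x := by
    conv_lhs => rw [← hx]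
    rw [mul_assoc (e * x) e e, he, hx]
  have het : e * t = t := by
    conv_lhs => rw [← hte]
    rw [← mul_assoc, ← mul_assoc, he, hte]
  refine ⟨f, hf, ⟨r, hfr⟩, ⟨e - t, ?_⟩⟩
  have hfe : f = e - (e - x) * t := by rw [← hft]; exact (sub_sub_cancel e f).symm
  rw [hfe, sub_mul, mul_sub, hxe, het]
  abel
end

section
/- Let R be a unital ring graded by a group Γ with identity ε. Then R is graded clean (every homogeneous element is the sum of a homogeneous unit and a homogeneous idempotent) if and only if the ε-component R_ε is a clean ring and, for every γ ≠ ε, every nonzero element of R_γ is invertible in R. -/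
open DirectSum

section Aux

variable {Γ R : Type*} [AddGroup Γ] [DecidableEq Γ] [Ring R]
  (𝒜 : Γ → AddSubgroup R) [SetLike.GradedMonoid 𝒜] [DirectSum.Decomposition 𝒜]

/-- Distinct homogeneous components intersect trivially. -/
lemma aux8_mem_ne {x : R} {γ δ : Γ} (h1 : x ∈ 𝒜 γ) (h2 : x ∈ 𝒜 δ) (h : δ ≠ γ) : x = 0 := by
  have hs := DirectSum.decompose_of_mem_same 𝒜 h1
  rw [DirectSum.decompose_of_mem_ne 𝒜 h2 h] at hs
  exact hs.symm

/-- A homogeneous idempotent lies in the identity component. -/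
lemma aux8_idem_mem_zero {e : R} {γ : Γ} (he : e ∈ 𝒜 γ) (hee : e * e = e) :
    e ∈ 𝒜 (0 : Γ) := by
  by_cases hγ : γ = 0
  · exact hγ ▸ he
  · have h2 : e ∈ 𝒜 (γ + γ) := hee ▸ SetLike.mul_mem_graded he he
    have : e = 0 := aux8_mem_ne 𝒜 he h2 (by
      intro h; exact hγ (by rwa [add_eq_right] at h))
    exact this ▸ zero_mem _

end Aux

section Aux2

variable {Γ R : Type*} [AddGroup Γ] [DecidableEq Γ] [Ring R]
  (𝒜 : Γ → AddSubgroup R) [GradedRing 𝒜]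

/-- A homogeneous unit has a homogeneous (two-sided) inverse. -/
lemma aux8_unit_inv {u : R} {γ : Γ} (hu : u ∈ 𝒜 γ) (huu : IsUnit u) :
    ∃ v ∈ 𝒜 (-γ), u * v = 1 ∧ v * u = 1 := by
  obtain ⟨u0, rfl⟩ := huu
  set w : R := ((u0⁻¹ : Rˣ) : R) with hw
  refine ⟨(decompose 𝒜 w (-γ) : R), SetLike.coe_mem _, ?_, ?_⟩
  · have h1 : ((u0 : R) * (decompose 𝒜 w (-γ) : R)) =
        (decompose 𝒜 ((u0 : R) * w) (γ + -γ) : R) :=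
      (DirectSum.coe_decompose_mul_add_of_left_mem 𝒜 hu).symm
    rw [h1, hw, Units.mul_inv, add_neg_cancel,
      DirectSum.decompose_of_mem_same 𝒜 (SetLike.one_mem_graded 𝒜)]
  · have h1 : ((decompose 𝒜 w (-γ) : R) * (u0 : R)) =
        (decompose 𝒜 (w * (u0 : R)) (-γ + γ) : R) :=
      (DirectSum.coe_decompose_mul_add_of_right_mem 𝒜 hu).symm
    rw [h1, hw, Units.inv_mul, neg_add_cancel,
      DirectSum.decompose_of_mem_same 𝒜 (SetLike.one_mem_graded 𝒜)]

end Aux2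

/-- A `Γ`-graded unital ring is graded clean iff its `ε`-component is a clean
ring and every nonzero element of `R_γ`, `γ ≠ ε`, is invertible in `R`. -/
theorem stmt_8 {Γ R : Type*} [AddGroup Γ] [DecidableEq Γ] [Ring R]
    (𝒜 : Γ → AddSubgroup R) [SetLike.GradedMonoid 𝒜] [DirectSum.Decomposition 𝒜] :
    (∀ x : R, (∃ γ, x ∈ 𝒜 γ) →
      ∃ u e : R, (∃ γ, u ∈ 𝒜 γ) ∧ IsUnit u ∧ (∃ γ, e ∈ 𝒜 γ) ∧ e * e = e ∧ x = u + e)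
    ↔ ((∀ x ∈ 𝒜 (0 : Γ), ∃ u e : R, u ∈ 𝒜 (0 : Γ) ∧ e ∈ 𝒜 (0 : Γ) ∧ e * e = e ∧
          (∃ v ∈ 𝒜 (0 : Γ), u * v = 1 ∧ v * u = 1) ∧ x = u + e) ∧
        (∀ γ : Γ, γ ≠ 0 → ∀ x ∈ 𝒜 γ, x ≠ 0 → IsUnit x)) := by
  constructor
  · intro H
    constructor
    · -- the identity component is clean
      intro x hx0
      obtain ⟨u, e, ⟨α, hu⟩, huu, ⟨β, he⟩, hee, hx⟩ := H x ⟨0, hx0⟩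
      have he0 : e ∈ 𝒜 (0 : Γ) := aux8_idem_mem_zero 𝒜 he hee
      have hu0 : u ∈ 𝒜 (0 : Γ) := by
        have hue : u = x - e := by rw [hx]; abel
        exact hue ▸ sub_mem hx0 he0
      haveI : GradedRing 𝒜 :=
        { ‹SetLike.GradedMonoid 𝒜›, ‹DirectSum.Decomposition 𝒜› with }
      obtain ⟨v, hv, huv, hvu⟩ := aux8_unit_inv 𝒜 hu0 huu
      rw [neg_zero] at hv
      exact ⟨u, e, hu0, he0, hee, ⟨v, hv, huv, hvu⟩, hx⟩
    · -- nonzero homogeneous elements of nonzero degree are units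
      intro γ hγ x hxγ hxne
      obtain ⟨u, e, ⟨α, hu⟩, huu, ⟨β, he⟩, hee, hx⟩ := H x ⟨γ, hxγ⟩
      have he0 : e ∈ 𝒜 (0 : Γ) := aux8_idem_mem_zero 𝒜 he hee
      by_cases hα : α = 0
      · subst hα
        have hmem : x ∈ 𝒜 (0 : Γ) := hx ▸ add_mem hu he0
        exact absurd (aux8_mem_ne 𝒜 hxγ hmem (Ne.symm hγ)) hxne
      · have he_zero : e = 0 := by
          have h2 : e = x - u := by rw [hx]; abel
          calc e = (DirectSum.decompose 𝒜 e 0 : R) :=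
                (DirectSum.decompose_of_mem_same 𝒜 he0).symm
            _ = (DirectSum.decompose 𝒜 x 0 : R) - (DirectSum.decompose 𝒜 u 0 : R) := by
                rw [h2, DirectSum.decompose_sub]; simp
            _ = 0 := by
                rw [DirectSum.decompose_of_mem_ne 𝒜 hxγ hγ,
                  DirectSum.decompose_of_mem_ne 𝒜 hu hα, sub_zero]
        rw [he_zero, add_zero] at hx
        exact hx ▸ huu
  · rintro ⟨h1, h2⟩ x ⟨γ, hx⟩
    by_cases hγ : γ = 0
    · subst hγ
      obtain ⟨u, e, hu, he, hee, ⟨v, _, huv, hvu⟩, hxe⟩ := h1 x hx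
      exact ⟨u, e, ⟨0, hu⟩, ⟨⟨u, v, huv, hvu⟩, rfl⟩, ⟨0, he⟩, hee, hxe⟩
    · by_cases hx0 : x = 0
      · obtain ⟨u, e, hu, he, hee, ⟨v, _, huv, hvu⟩, hxe⟩ := h1 0 (zero_mem _)
        exact ⟨u, e, ⟨0, hu⟩, ⟨⟨u, v, huv, hvu⟩, rfl⟩, ⟨0, he⟩, hee, hx0 ▸ hxe⟩
      · exact ⟨x, 0, ⟨γ, hx⟩, h2 γ hγ x hx hx0, ⟨0, zero_mem _⟩, mul_zero 0,
          (add_zero x).symm⟩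
end

section
/- Let R be a Γ-graded unital ring. Then R satisfies the graded right exchange condition (for every homogeneous x there is a homogeneous idempotent e with e ∈ xR and 1 − e ∈ (1 − x)R) if and only if R satisfies the graded lifting condition (for every homogeneous x there is a homogeneous idempotent e with e − x ∈ (x − x²)R). -/
/-- For a `Γ`-graded unital ring, the graded right exchange condition is
equivalent to the graded lifting condition. -/
theorem stmt_10 {Γ R : Type*} [AddGroup Γ] [DecidableEq Γ] [Ring R]
    (𝒜 : Γ → AddSubgroup R) [SetLike.GradedMonoid 𝒜] [DirectSum.Decomposition 𝒜] :
    (∀ x : R, (∃ γ, x ∈ 𝒜 γ) → ∃ e : R, (∃ γ, e ∈ 𝒜 γ) ∧ e * e = e ∧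
        (∃ r : R, e = x * r) ∧ (∃ s : R, 1 - e = (1 - x) * s))
    ↔ (∀ x : R, (∃ γ, x ∈ 𝒜 γ) → ∃ e : R, (∃ γ, e ∈ 𝒜 γ) ∧ e * e = e ∧
        (∃ r : R, e - x = (x - x * x) * r)) := by
  constructor
  · intro h x hx
    obtain ⟨e, hγ, he, ⟨r, hr⟩, ⟨s, hs⟩⟩ := h x hx
    refine ⟨e, hγ, he, r - s, ?_⟩
    have key : x * r + (1 - x) * s = 1 := by rw [← hr, ← hs, add_sub_cancel]
    calc e - x = x * r - x * (x * r + (1 - x) * s) := by rw [key, mul_one, hr]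
      _ = (x - x * x) * (r - s) := by noncomm_ring
  · intro h x hx
    obtain ⟨e, hγ, he, r, hr⟩ := h x hx
    have he' : e = (x - x * x) * r + x := sub_eq_iff_eq_add.mp hr
    refine ⟨e, hγ, he, ⟨1 + (1 - x) * r, by rw [he']; noncomm_ring⟩,
      ⟨1 - x * r, by rw [he']; noncomm_ring⟩⟩
end

section
/- Let R be a Γ-graded unital ring that is graded clean. Then R is graded right exchange: for every homogeneous x ∈ R there is a homogeneous idempotent f with f ∈ xR and 1 − f ∈ (1 − x)R. (Proof via: if x = e + u is a graded clean decomposition, then f = u^{-1}(1 − e)u is a homogeneous idempotent satisfying (x − x²)u^{-1} = f − x.) -/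
/-- The inverse of a homogeneous unit has a homogeneous two-sided inverse. -/
theorem aux_homog_inv {Γ R : Type*} [AddGroup Γ] [DecidableEq Γ] [Ring R]
    (𝒜 : Γ → AddSubgroup R) [GradedRing 𝒜]
    {u v : R} {γ : Γ} (hu : u ∈ 𝒜 γ) (huv : u * v = 1) (hvu : v * u = 1) :
    ∃ w ∈ 𝒜 (-γ), u * w = 1 ∧ w * u = 1 := by
  refine ⟨DirectSum.decompose 𝒜 v (-γ), SetLike.coe_mem _, ?_, ?_⟩
  · have h := DirectSum.coe_decompose_mul_add_of_left_mem 𝒜 (b := v) hu (j := -γ)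
    rw [huv, add_neg_cancel,
      DirectSum.decompose_of_mem_same 𝒜 (SetLike.one_mem_graded 𝒜)] at h
    exact h.symm
  · have h := DirectSum.coe_decompose_mul_add_of_right_mem 𝒜 (a := v) hu (i := -γ)
    rw [hvu, neg_add_cancel,
      DirectSum.decompose_of_mem_same 𝒜 (SetLike.one_mem_graded 𝒜)] at h
    exact h.symm

/-- A graded clean `Γ`-graded unital ring is graded right exchange. -/
theorem stmt_11 {Γ R : Type*} [AddGroup Γ] [DecidableEq Γ] [Ring R]
    (𝒜 : Γ → AddSubgroup R) [SetLike.GradedMonoid 𝒜] [DirectSum.Decomposition 𝒜]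
    (hclean : ∀ x : R, (∃ γ, x ∈ 𝒜 γ) →
      ∃ u e : R, (∃ γ, u ∈ 𝒜 γ) ∧ IsUnit u ∧ (∃ γ, e ∈ 𝒜 γ) ∧ e * e = e ∧ x = e + u) :
    ∀ x : R, (∃ γ, x ∈ 𝒜 γ) → ∃ f : R, (∃ γ, f ∈ 𝒜 γ) ∧ f * f = f ∧
      (∃ r : R, f = x * r) ∧ (∃ s : R, 1 - f = (1 - x) * s) := by
  haveI : GradedRing 𝒜 := ⟨⟩
  intro x hx
  obtain ⟨u, e, ⟨γ, hu⟩, huu, ⟨δ, he⟩, hee, hxe⟩ := hclean x hx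
  obtain ⟨U, rfl⟩ := huu
  obtain ⟨w, hwmem, hw1, hw2⟩ := aux_homog_inv 𝒜 hu U.mul_inv U.inv_mul
  set u' : R := (U : R) with hu'
  -- either `e = 0` or `e` has degree `0`
  have hcase : e = 0 ∨ δ = 0 := by
    by_cases hδ : δ = 0
    · exact Or.inr hδ
    · left
      have h1 : e ∈ 𝒜 (δ + δ) := hee ▸ SetLike.mul_mem_graded he he
      have hne : δ + δ ≠ δ := fun h =>
        hδ (add_right_cancel (a := δ) (b := δ) (c := 0) (h.trans (zero_add δ).symm))
      have h2 := DirectSum.decompose_of_mem_ne 𝒜 he hne.symm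
      have h3 := DirectSum.decompose_of_mem_same 𝒜 h1
      rw [h2] at h3
      exact h3.symm
  have hw1' : ∀ t : R, u' * (w * t) = t := fun t => by rw [← mul_assoc, hw1, one_mul]
  have hw2' : ∀ t : R, w * (u' * t) = t := fun t => by rw [← mul_assoc, hw2, one_mul]
  have hee' : ∀ t : R, e * (e * t) = e * t := fun t => by rw [← mul_assoc, hee]
  refine ⟨1 - u' * (e * w), ?_, ?_, ?_, ?_⟩
  · refine ⟨0, ?_⟩
    rcases hcase with h | h
    · simp [h, SetLike.one_mem_graded]
    · subst h
      have hm : u' * (e * w) ∈ 𝒜 (γ + (0 + -γ)) :=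
        SetLike.mul_mem_graded hu (SetLike.mul_mem_graded he hwmem)
      rw [show γ + (0 + -γ) = 0 by simp] at hm
      exact sub_mem (SetLike.one_mem_graded 𝒜) hm
  · simp only [mul_sub, sub_mul, mul_add, add_mul, mul_assoc, mul_one, one_mul,
      hw1, hw2, hw1', hw2', hee', hee]
    abel
  · refine ⟨1 + (1 - (e + u')) * w, ?_⟩
    rw [hxe]
    simp only [mul_sub, sub_mul, mul_add, add_mul, mul_assoc, mul_one, one_mul,
      hw1, hw2, hw1', hw2', hee', hee]
    abel
  · refine ⟨1 - (e + u') * w, ?_⟩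
    rw [hxe]
    simp only [mul_sub, sub_mul, mul_add, add_mul, mul_assoc, mul_one, one_mul,
      hw1, hw2, hw1', hw2', hee', hee]
    abel
end

section
/- Let R be a Γ-graded unital ring such that R_ε is an exchange ring, and let I be a graded right ideal of R. Then homogeneous idempotents lift modulo I: for every homogeneous x ∈ R with x − x² ∈ I, there exists an idempotent e ∈ R_ε with e − x ∈ I. -/
/-- If `R` is a `Γ`-graded unital ring whose `ε`-component is an exchange ring,
then homogeneous idempotents lift modulo every graded right ideal. -/
theorem stmt_14 {Γ R : Type*} [AddGroup Γ] [DecidableEq Γ] [Ring R]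
    (𝒜 : Γ → AddSubgroup R) [SetLike.GradedMonoid 𝒜] [DirectSum.Decomposition 𝒜]
    (hexch : ∀ a ∈ 𝒜 (0 : Γ), ∃ f ∈ 𝒜 (0 : Γ), f * f = f ∧
      ∃ r ∈ 𝒜 (0 : Γ), f - a = (a - a * a) * r)
    (I : AddSubgroup R)
    (hIr : ∀ a ∈ I, ∀ r : R, a * r ∈ I)
    (hIgr : ∀ a ∈ I, ∀ γ : Γ, ((DirectSum.decompose 𝒜 a γ : 𝒜 γ) : R) ∈ I) :
    ∀ x : R, (∃ γ, x ∈ 𝒜 γ) → x - x * x ∈ I →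
      ∃ e ∈ 𝒜 (0 : Γ), e * e = e ∧ e - x ∈ I := by
  rintro x ⟨γ, hx⟩ hxI
  by_cases hγ : γ = 0
  · subst hγ
    obtain ⟨f, hf0, hff, r, hr0, hfr⟩ := hexch x hx
    exact ⟨f, hf0, hff, hfr ▸ hIr _ hxI r⟩
  · -- γ ≠ 0 : the γ-component of x - x*x is x, so x ∈ I
    have hxx : x * x ∈ 𝒜 (γ + γ) := SetLike.mul_mem_graded hx hx
    have hne : γ + γ ≠ γ := fun h => hγ (by
      have := add_right_cancel (a := γ) (b := γ) (c := 0) (by simpa using h)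
      exact this)
    have h1 : ((DirectSum.decompose 𝒜 (x - x * x) γ : 𝒜 γ) : R) = x := by
      rw [DirectSum.decompose_sub]
      simp [DirectSum.decompose_of_mem_same 𝒜 hx,
        DirectSum.decompose_of_mem_ne 𝒜 hxx hne]
    have hxmem : x ∈ I := h1 ▸ hIgr _ hxI γ
    exact ⟨0, (𝒜 0).zero_mem, by simp, by simpa using I.neg_mem hxmem⟩
end

section
/- Let K be a field, trivially ℤ-graded, and let S = 𝕄ₙ(K)(γ₁,…,γₙ) with any shifts γ₁,…,γₙ ∈ ℤ. Then S is graded right exchange: for every homogeneous a ∈ S there is a homogeneous idempotent e ∈ S₀ with e ∈ aS and 1 − e ∈ (1 − a)S. -/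
open LinearMap in
lemma exists_inner_inverse {K V : Type*} [Field K] [AddCommGroup V] [Module K V]
    (f : V →ₗ[K] V) : ∃ g : V →ₗ[K] V, f ∘ₗ g ∘ₗ f = f := by
  obtain ⟨q, hq⟩ := (range f).exists_isCompl
  obtain ⟨s, hs⟩ := f.rangeRestrict.exists_rightInverse_of_surjective
    (by rw [range_rangeRestrict])
  refine ⟨s ∘ₗ (range f).linearProjOfIsCompl q hq, ?_⟩
  ext v
  have h1 : (range f).linearProjOfIsCompl q hq (f v) = ⟨f v, mem_range_self f v⟩ :=
    Submodule.linearProjOfIsCompl_apply_left hq ⟨f v, mem_range_self f v⟩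
  have h2 := congrArg Subtype.val (LinearMap.congr_fun hs ⟨f v, mem_range_self f v⟩)
  simpa [h1] using h2

lemma matrix_inner_inverse {K : Type*} [Field K] {n : ℕ}
    (a : Matrix (Fin n) (Fin n) K) : ∃ b, a * b * a = a := by
  obtain ⟨g, hg⟩ := exists_inner_inverse (Matrix.toLin' a)
  refine ⟨Matrix.toLin'.symm g, Matrix.toLin'.injective ?_⟩
  rw [Matrix.toLin'_mul, Matrix.toLin'_mul, LinearEquiv.apply_symm_apply]
  exact hg

lemma idem_aux {R : Type*} [Ring R] (e a : R) (h1 : e * e = e) (h2 : e * a = a) :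
    (e + a - a * e) * (e + a - a * e) = e + a - a * e := by
  have h3 : e * (a * e) = a * e := by rw [← mul_assoc, h2]
  have h4 : a * (e * e) = a * e := by rw [h1]
  have h5 : a * (e * a) = a * a := by rw [h2]
  have h6 : a * (e * (a * e)) = a * (a * e) := by rw [h3]
  simp only [sub_mul, mul_sub, add_mul, mul_add, mul_assoc, h1, h2, h3, h4, h5, h6]
  abel

/-- The graded matrix ring `S = 𝕄ₙ(K)(γ₁,…,γₙ)` over a trivially graded field
is graded right exchange: for every degree `δ` and `a ∈ S_δ` there is an
idempotent `e ∈ S₀` with `e ∈ aS` and `1 - e ∈ (1 - a)S`. -/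
theorem stmt_16 (K : Type*) [Field K] (n : ℕ) (γ : Fin n → ℤ)
    (δ : ℤ) (a : Matrix (Fin n) (Fin n) K)
    (ha : ∀ i j : Fin n, γ j - γ i ≠ δ → a i j = 0) :
    ∃ e : Matrix (Fin n) (Fin n) K,
      (∀ i j : Fin n, γ j - γ i ≠ 0 → e i j = 0) ∧ e * e = e ∧
      (∃ r : Matrix (Fin n) (Fin n) K, e = a * r) ∧
      (∃ s : Matrix (Fin n) (Fin n) K, 1 - e = (1 - a) * s) := by
  by_cases hδ : δ = 0
  · -- degree-zero case: a lies in the block-diagonal semisimple part S₀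
    subst hδ
    obtain ⟨b, hb⟩ := matrix_inner_inverse a
    set b₀ : Matrix (Fin n) (Fin n) K := fun i j => if γ j - γ i = 0 then b i j else 0 with hb₀def
    have hb₀0 : ∀ i j, γ j - γ i ≠ 0 → b₀ i j = 0 := by
      intro i j h; simp [hb₀def, h]
    -- a * b₀ * a = a
    have key : a * b₀ * a = a := by
      ext i j
      by_cases hij : γ j - γ i = 0
      · have : (a * b₀ * a) i j = (a * b * a) i j := by
          simp only [Matrix.mul_apply]
          refine Finset.sum_congr rfl fun l _ => ?_
          rcases eq_or_ne (a l j) 0 with h' | h'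
          · simp [h']
          · have hl : γ j = γ l := by
              by_contra hc; exact h' (ha l j (by omega))
            congr 1
            refine Finset.sum_congr rfl fun k _ => ?_
            by_cases hkl : γ l - γ k = 0
            · simp [hb₀def, hkl]
            · have : a i k = 0 := ha i k (by omega)
              simp [this]
        rw [this, hb]
      · rw [ha i j hij]
        simp only [Matrix.mul_apply]
        refine Finset.sum_eq_zero fun l _ => ?_
        rcases eq_or_ne (a l j) 0 with h' | h'
        · simp [h']
        · have hl : γ j = γ l := by
            by_contra hc; exact h' (ha l j (by omega))
          refine mul_eq_zero_of_left (Finset.sum_eq_zero fun k _ => ?_) _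
          rcases eq_or_ne (a i k) 0 with h | h
          · simp [h]
          · have hk : γ k = γ i := by
              by_contra hc; exact h (ha i k (by omega))
            have : b₀ k l = 0 := hb₀0 k l (by omega)
            simp [this]
    -- membership in S₀ is closed under multiplication
    have mul0 : ∀ x y : Matrix (Fin n) (Fin n) K,
        (∀ i j, γ j - γ i ≠ 0 → x i j = 0) → (∀ i j, γ j - γ i ≠ 0 → y i j = 0) →
        ∀ i j, γ j - γ i ≠ 0 → (x * y) i j = 0 := by
      intro x y hx hy i j hij
      rw [Matrix.mul_apply]
      refine Finset.sum_eq_zero fun k _ => ?_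
      by_cases hk : γ k - γ i = 0
      · rw [hy k j (by omega), mul_zero]
      · rw [hx i k hk, zero_mul]
    have he₀0 : ∀ i j, γ j - γ i ≠ 0 → (a * b₀) i j = 0 := mul0 a b₀ ha hb₀0
    refine ⟨a * b₀ + a - a * (a * b₀), ?_, ?_, ⟨b₀ + 1 - a * b₀, by noncomm_ring⟩,
      ⟨1 - a * b₀, by noncomm_ring⟩⟩
    · intro i j hij
      have h1 := he₀0 i j hij
      have h2 := ha i j hij
      have h3 := mul0 a (a * b₀) ha he₀0 i j hij
      simp [Matrix.sub_apply, Matrix.add_apply, h1, h2, h3]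
    · refine idem_aux (a * b₀) a ?_ ?_
      · rw [← mul_assoc, key]
      · exact key
  · -- nonzero degree: a is nilpotent, take e = 0
    have pow_supp : ∀ (k : ℕ) (i j : Fin n), (a ^ k) i j ≠ 0 → γ j - γ i = k * δ := by
      intro k
      induction k with
      | zero =>
        intro i j h
        simp only [pow_zero] at h
        by_cases hij : i = j
        · subst hij; simp
        · exact absurd (Matrix.one_apply_ne hij) h
      | succ k ih =>
        intro i j h
        rw [pow_succ, Matrix.mul_apply] at h
        obtain ⟨l, -, hl⟩ := Finset.exists_ne_zero_of_sum_ne_zero h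
        have h1 : (a ^ k) i l ≠ 0 := left_ne_zero_of_mul hl
        have h2 : a l j ≠ 0 := right_ne_zero_of_mul hl
        have e1 := ih i l h1
        have e2 : γ j - γ l = δ := by by_contra hc; exact h2 (ha l j hc)
        push_cast
        linarith
    set B : ℤ := ∑ i : Fin n, |γ i| with hB
    have hBnn : 0 ≤ B := Finset.sum_nonneg fun i _ => abs_nonneg _
    have hBb : ∀ i : Fin n, |γ i| ≤ B :=
      fun i => Finset.single_le_sum (fun i _ => abs_nonneg (γ i)) (Finset.mem_univ i)
    set N : ℕ := (2 * B + 1).toNat with hN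
    have hNval : (N : ℤ) = 2 * B + 1 := Int.toNat_of_nonneg (by omega)
    have hnil : IsNilpotent a := by
      refine ⟨N, ?_⟩
      ext i j
      rw [Matrix.zero_apply]
      by_contra h
      have heq := pow_supp N i j h
      have hi := hBb i
      have hj := hBb j
      have habs : |γ j - γ i| ≤ 2 * B := by
        calc |γ j - γ i| ≤ |γ j| + |γ i| := abs_sub _ _
        _ ≤ 2 * B := by linarith
      have hd : 1 ≤ |δ| := by
        have := abs_pos.mpr hδ; omega
      have h1 : |(N : ℤ) * δ| ≤ 2 * B := heq ▸ habs
      rw [abs_mul, abs_of_nonneg (Int.natCast_nonneg N)] at h1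
      have h2 : (N : ℤ) * 1 ≤ (N : ℤ) * |δ| :=
        mul_le_mul_of_nonneg_left hd (Int.natCast_nonneg N)
      rw [mul_one, hNval] at h2
      rw [hNval] at h1
      linarith
    have hu : IsUnit (1 - a) := hnil.isUnit_one_sub
    refine ⟨0, fun i j _ => rfl, by simp, ⟨0, by simp⟩, ⟨↑hu.unit⁻¹, ?_⟩⟩
    rw [sub_zero]
    exact (hu.mul_val_inv).symm
end

section
/- Let E be a graph with finitely many vertices and K a field, and suppose the unital Leavitt path algebra L_K(E) (ℤ-graded as usual) is graded unit-regular: for every homogeneous x there is a homogeneous unit u with xux = x. Then E is row-finite: no vertex emits infinitely many edges. -/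
/-! Leavitt path algebra of a directed graph, defined as a `RingQuot` of the
free algebra on vertices, edges and ghost edges. -/

structure LPAGraph where
  V : Type
  E : Type
  s : E → V
  r : E → V

namespace LPAGraph

inductive Gen (G : LPAGraph)
  | vert : G.V → Gen G
  | edge : G.E → Gen G
  | ghost : G.E → Gen G

variable (K : Type) [Field K] (G : LPAGraph)

open FreeAlgebra in
/-- The Leavitt path algebra relations. -/
inductive Rel : FreeAlgebra K (Gen G) → FreeAlgebra K (Gen G) → Prop
  | vv {u w : G.V} (h : u ≠ w) :
      Rel (ι K (Gen.vert u) * ι K (Gen.vert w)) 0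
  | v_idem (u : G.V) :
      Rel (ι K (Gen.vert u) * ι K (Gen.vert u)) (ι K (Gen.vert u))
  | se (e : G.E) : Rel (ι K (Gen.vert (G.s e)) * ι K (Gen.edge e)) (ι K (Gen.edge e))
  | er (e : G.E) : Rel (ι K (Gen.edge e) * ι K (Gen.vert (G.r e))) (ι K (Gen.edge e))
  | rg (e : G.E) : Rel (ι K (Gen.vert (G.r e)) * ι K (Gen.ghost e)) (ι K (Gen.ghost e))
  | gs (e : G.E) : Rel (ι K (Gen.ghost e) * ι K (Gen.vert (G.s e))) (ι K (Gen.ghost e))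
  | ck1_ne {e f : G.E} (h : e ≠ f) :
      Rel (ι K (Gen.ghost e) * ι K (Gen.edge f)) 0
  | ck1 (e : G.E) :
      Rel (ι K (Gen.ghost e) * ι K (Gen.edge e)) (ι K (Gen.vert (G.r e)))
  | ck2 (v : G.V) (hfin : {e : G.E | G.s e = v}.Finite)
      (hne : {e : G.E | G.s e = v}.Nonempty) :
      Rel (ι K (Gen.vert v))
        (hfin.toFinset.sum fun e => ι K (Gen.edge e) * ι K (Gen.ghost e))

/-- The Leavitt path algebra (inside its canonical unital envelope). -/
abbrev L := RingQuot (Rel K G)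

/-- The image of a vertex in the Leavitt path algebra. -/
def vert (v : G.V) : L K G := RingQuot.mkRingHom (Rel K G) (FreeAlgebra.ι K (Gen.vert v))

/-- The image of an edge. -/
def edge (e : G.E) : L K G := RingQuot.mkRingHom (Rel K G) (FreeAlgebra.ι K (Gen.edge e))

/-- The image of a ghost edge `e*`. -/
def ghost (e : G.E) : L K G := RingQuot.mkRingHom (Rel K G) (FreeAlgebra.ι K (Gen.ghost e))

/-- The product `e₁⋯eₙ` associated with a list of edges. -/
def pathProd (p : List G.E) : L K G := (p.map (edge K G)).prod

/-- The product `eₙ*⋯e₁*` associated with a list of edges. -/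
def starProd (p : List G.E) : L K G := (p.reverse.map (ghost K G)).prod

/-- The list of edges forms a path. -/
def IsPath (p : List G.E) : Prop := p.Chain' fun e f => G.r e = G.s f

/-- Monomials `p q*` of degree `n = |p| - |q|` (with `r(p) = r(q) = v`). -/
def monoSet (n : ℤ) : Set (L K G) :=
  { x | ∃ (p q : List G.E) (v : G.V), IsPath G p ∧ IsPath G q ∧
      (∀ e : G.E, p.getLast? = some e → G.r e = v) ∧
      (∀ e : G.E, q.getLast? = some e → G.r e = v) ∧
      (p.length : ℤ) - q.length = n ∧
      x = pathProd K G p * vert K G v * starProd K G q }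

/-- The degree-`n` homogeneous component of the Leavitt path algebra. -/
def component (n : ℤ) : Submodule K (L K G) := Submodule.span K (monoSet K G n)

/-- The Leavitt path algebra as a subspace of its unital envelope:
the span of all monomials `p q*`. -/
def lpa : Submodule K (L K G) := Submodule.span K (⋃ n : ℤ, monoSet K G n)

end LPAGraph

namespace LPAGraph

variable {K : Type} [Field K] {G : LPAGraph}

/-! ### Basic relations in the Leavitt path algebra -/

lemma mk_rel {x y : FreeAlgebra K (Gen G)} (h : Rel K G x y) :
    RingQuot.mkRingHom (Rel K G) x = RingQuot.mkRingHom (Rel K G) y :=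
  RingQuot.mkRingHom_rel h

lemma vert_mul_vert_ne {u w : G.V} (h : u ≠ w) : vert K G u * vert K G w = 0 := by
  rw [vert, vert, ← map_mul, mk_rel (Rel.vv h), map_zero]

lemma vert_mul_vert_self (u : G.V) : vert K G u * vert K G u = vert K G u := by
  rw [vert, ← map_mul, mk_rel (Rel.v_idem u)]

lemma vert_mul_edge (e : G.E) : vert K G (G.s e) * edge K G e = edge K G e := by
  rw [vert, edge, ← map_mul, mk_rel (Rel.se e)]

lemma edge_mul_vert (e : G.E) : edge K G e * vert K G (G.r e) = edge K G e := by
  rw [vert, edge, ← map_mul, mk_rel (Rel.er e)]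

lemma vert_mul_ghost (e : G.E) : vert K G (G.r e) * ghost K G e = ghost K G e := by
  rw [vert, ghost, ← map_mul, mk_rel (Rel.rg e)]

lemma ghost_mul_vert (e : G.E) : ghost K G e * vert K G (G.s e) = ghost K G e := by
  rw [vert, ghost, ← map_mul, mk_rel (Rel.gs e)]

lemma ghost_mul_edge_ne {e f : G.E} (h : e ≠ f) : ghost K G e * edge K G f = 0 := by
  rw [ghost, edge, ← map_mul, mk_rel (Rel.ck1_ne h), map_zero]

lemma ghost_mul_edge (e : G.E) : ghost K G e * edge K G e = vert K G (G.r e) := by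
  rw [ghost, edge, vert, ← map_mul, mk_rel (Rel.ck1 e)]

lemma vert_eq_sum (v : G.V) (hfin : {e : G.E | G.s e = v}.Finite)
    (hne : {e : G.E | G.s e = v}.Nonempty) :
    vert K G v = hfin.toFinset.sum fun e => edge K G e * ghost K G e := by
  rw [vert, mk_rel (Rel.ck2 v hfin hne), map_sum]
  exact Finset.sum_congr rfl fun e _ => by rw [map_mul]; rfl

lemma ghost_mul_vert_ne {e : G.E} {w : G.V} (h : w ≠ G.s e) :
    ghost K G e * vert K G w = 0 := by
  rw [← ghost_mul_vert e, mul_assoc, vert_mul_vert_ne (Ne.symm h), mul_zero]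

lemma pathProd_cons (e : G.E) (p : List G.E) :
    pathProd K G (e :: p) = edge K G e * pathProd K G p := by
  simp [pathProd]

lemma starProd_cons (e : G.E) (p : List G.E) :
    starProd K G (e :: p) = starProd K G p * ghost K G e := by
  simp [starProd]

end LPAGraph

namespace LPAGraph

variable (K : Type) [Field K] (G : LPAGraph)

/-! ### The grading, via a map to Laurent series over `L K G` -/

noncomputable def genF : Gen G → AddMonoidAlgebra (L K G) ℤ
  | .vert v => AddMonoidAlgebra.single 0 (vert K G v)
  | .edge e => AddMonoidAlgebra.single 1 (edge K G e)
  | .ghost e => AddMonoidAlgebra.single (-1) (ghost K G e)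

noncomputable def FF : FreeAlgebra K (Gen G) →ₐ[K] AddMonoidAlgebra (L K G) ℤ :=
  FreeAlgebra.lift K (genF K G)

lemma FF_iota (g : Gen G) : FF K G (FreeAlgebra.ι K g) = genF K G g :=
  FreeAlgebra.lift_ι_apply _ _

lemma amsingle_finset_sum {ι : Type*} (a : ℤ) (s : Finset ι) (f : ι → L K G) :
    AddMonoidAlgebra.single a (∑ i ∈ s, f i) = ∑ i ∈ s, AddMonoidAlgebra.single a (f i) := by
  induction s using Finset.cons_induction with
  | empty => simp
  | cons i s hi ih => rw [Finset.sum_cons, Finset.sum_cons, AddMonoidAlgebra.single_add, ih]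

lemma FF_rel : ∀ ⦃x y : FreeAlgebra K (Gen G)⦄, Rel K G x y → FF K G x = FF K G y := by
  intro x y h
  cases h with
  | @vv u w h =>
      rw [map_mul, map_zero]
      simp only [FF_iota, genF]
      rw [AddMonoidAlgebra.single_mul_single, vert_mul_vert_ne h]
      simp
  | v_idem u =>
      rw [map_mul]
      simp only [FF_iota, genF]
      rw [AddMonoidAlgebra.single_mul_single, vert_mul_vert_self u]
      simp
  | se e =>
      rw [map_mul]
      simp only [FF_iota, genF]
      rw [AddMonoidAlgebra.single_mul_single, vert_mul_edge e]
      simp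
  | er e =>
      rw [map_mul]
      simp only [FF_iota, genF]
      rw [AddMonoidAlgebra.single_mul_single, edge_mul_vert e]
      simp
  | rg e =>
      rw [map_mul]
      simp only [FF_iota, genF]
      rw [AddMonoidAlgebra.single_mul_single, vert_mul_ghost e]
      simp
  | gs e =>
      rw [map_mul]
      simp only [FF_iota, genF]
      rw [AddMonoidAlgebra.single_mul_single, ghost_mul_vert e]
      simp
  | @ck1_ne e f h =>
      rw [map_mul, map_zero]
      simp only [FF_iota, genF]
      rw [AddMonoidAlgebra.single_mul_single, ghost_mul_edge_ne h]
      simp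
  | ck1 e =>
      rw [map_mul]
      simp only [FF_iota, genF]
      rw [AddMonoidAlgebra.single_mul_single, ghost_mul_edge e]
      simp
  | ck2 v hfin hne =>
      rw [map_sum]
      simp only [map_mul, FF_iota, genF, AddMonoidAlgebra.single_mul_single, add_neg_cancel]
      rw [← amsingle_finset_sum, ← vert_eq_sum v hfin hne]

noncomputable def phi : L K G →ₐ[K] AddMonoidAlgebra (L K G) ℤ :=
  RingQuot.liftAlgHom K ⟨FF K G, FF_rel K G⟩

lemma phi_mk (a : FreeAlgebra K (Gen G)) :
    phi K G (RingQuot.mkRingHom (Rel K G) a) = FF K G a := by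
  have h : RingQuot.mkRingHom (Rel K G) a = RingQuot.mkAlgHom K (Rel K G) a := by
    rw [← RingQuot.mkAlgHom_coe K (Rel K G)]; rfl
  rw [h]; exact RingQuot.liftAlgHom_mkAlgHom_apply _ _ _ _

lemma phi_vert (v : G.V) : phi K G (vert K G v) = AddMonoidAlgebra.single 0 (vert K G v) := by
  rw [vert, phi_mk, FF_iota]; rfl

lemma phi_edge (e : G.E) : phi K G (edge K G e) = AddMonoidAlgebra.single 1 (edge K G e) := by
  rw [edge, phi_mk, FF_iota]; rfl

lemma phi_ghost (e : G.E) : phi K G (ghost K G e) = AddMonoidAlgebra.single (-1) (ghost K G e) := by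
  rw [ghost, phi_mk, FF_iota]; rfl

lemma phi_pathProd (p : List G.E) :
    phi K G (pathProd K G p) = AddMonoidAlgebra.single (p.length : ℤ) (pathProd K G p) := by
  induction p with
  | nil =>
      show phi K G 1 = AddMonoidAlgebra.single (((0:ℕ) : ℤ)) 1
      rw [map_one, AddMonoidAlgebra.one_def, Nat.cast_zero]
  | cons e p ih =>
      have hl : (1 : ℤ) + (p.length : ℤ) = ((e :: p).length : ℤ) := by
        rw [List.length_cons]; omega
      rw [pathProd_cons, map_mul, phi_edge, ih, AddMonoidAlgebra.single_mul_single,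
        ← pathProd_cons, hl]

lemma phi_starProd (q : List G.E) :
    phi K G (starProd K G q) = AddMonoidAlgebra.single (-(q.length : ℤ)) (starProd K G q) := by
  induction q with
  | nil =>
      show phi K G 1 = AddMonoidAlgebra.single (-((0:ℕ) : ℤ)) 1
      rw [map_one, AddMonoidAlgebra.one_def, Nat.cast_zero, neg_zero]
  | cons e q ih =>
      have hl : -(q.length : ℤ) + -1 = -(((e :: q).length : ℤ)) := by
        rw [List.length_cons]; omega
      rw [starProd_cons, map_mul, phi_ghost, ih, AddMonoidAlgebra.single_mul_single,
        ← starProd_cons, hl]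

lemma phi_mono {n : ℤ} {m : L K G} (hm : m ∈ monoSet K G n) :
    phi K G m = AddMonoidAlgebra.single n m := by
  obtain ⟨p, q, v, _, _, _, _, hlen, rfl⟩ := hm
  rw [map_mul, map_mul, phi_pathProd, phi_vert, phi_starProd,
    AddMonoidAlgebra.single_mul_single, AddMonoidAlgebra.single_mul_single]
  rw [show (p.length : ℤ) + 0 + -(q.length : ℤ) = n by omega]

lemma phi_component {n : ℤ} {a : L K G} (ha : a ∈ component K G n) :
    phi K G a = AddMonoidAlgebra.single n a := by
  induction ha using Submodule.span_induction with
  | mem m hm => exact phi_mono K G hm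
  | zero => simp
  | add x y hx hy ihx ihy => rw [map_add, ihx, ihy, ← AddMonoidAlgebra.single_add]
  | smul k x hx ih => rw [map_smul, ih, AddMonoidAlgebra.smul_single]

lemma coeff_one_mem {a : L K G} (ha : a ∈ lpa K G) :
    (phi K G a).coeff 1 ∈ component K G 1 := by
  induction ha using Submodule.span_induction with
  | mem m hm =>
      obtain ⟨s, ⟨n, rfl⟩, hm⟩ := hm
      rw [phi_mono K G hm, AddMonoidAlgebra.coeff_single, Finsupp.single_apply]
      by_cases h : n = 1
      · subst h; simp only [if_pos rfl]
        exact Submodule.subset_span hm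
      · rw [if_neg h]; exact Submodule.zero_mem _
  | zero => simp
  | add x y hx hy ihx ihy =>
      rw [map_add, AddMonoidAlgebra.coeff_add, Finsupp.add_apply]
      exact Submodule.add_mem _ ihx ihy
  | smul k x hx ih =>
      rw [map_smul, AddMonoidAlgebra.coeff_smul, Finsupp.smul_apply]
      exact Submodule.smul_mem _ _ ih

end LPAGraph

namespace LPAGraph

/-! ### A representation showing vertices are nonzero -/

/-- A regular vertex: emits at least one and finitely many edges. -/
def Reg (G : LPAGraph) (v : G.V) : Prop :=
  {e : G.E | G.s e = v}.Finite ∧ {e : G.E | G.s e = v}.Nonempty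

/-- `Ok G v p`: `p` is a path starting at `v`. -/
def Ok (G : LPAGraph) : G.V → List G.E → Prop
  | _, [] => True
  | v, e :: p => G.s e = v ∧ Ok G (G.r e) p

/-- The endpoint of a path starting at `v`. -/
def ran (G : LPAGraph) : G.V → List G.E → G.V
  | v, [] => v
  | _, e :: p => ran G (G.r e) p

/-- An infinite path. -/
structure Ray (G : LPAGraph) where
  f : ℕ → G.E
  ok : ∀ n, G.r (f n) = G.s (f (n + 1))

/-- Basis for the representation: finite paths ending at a non-regular vertex,
or infinite paths. -/
inductive Pt (G : LPAGraph) : Type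
  | fin : (v : G.V) → (p : List G.E) → Ok G v p → ¬ Reg G (ran G v p) → Pt G
  | inf : Ray G → Pt G

variable {G : LPAGraph}

/-- The source of a basis element. -/
def Pt.src : Pt G → G.V
  | .fin v _ _ _ => v
  | .inf γ => G.s (γ.f 0)

lemma Pt.fin_congr {v v' : G.V} (h : v = v') (p : List G.E)
    (h1 : Ok G v p) (hv1 : ¬ Reg G (ran G v p)) (h2 : Ok G v' p) (hv2 : ¬ Reg G (ran G v' p)) :
    Pt.fin v p h1 hv1 = Pt.fin v' p h2 hv2 := by subst h; rfl

lemma Ray.congr {γ γ' : Ray G} (h : γ.f = γ'.f) : γ = γ' := by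
  cases γ; cases γ'; cases h; rfl

/-- Prepending an edge to a ray. -/
def Ray.cons (e : G.E) (γ : Ray G) (h : G.r e = G.s (γ.f 0)) : Ray G where
  f := fun n => match n with | 0 => e | n + 1 => γ.f n
  ok := fun n => match n with | 0 => h | n + 1 => γ.ok n

/-- Prepending an edge to a basis element. -/
def Pt.cons (e : G.E) : (pt : Pt G) → G.r e = pt.src → Pt G
  | .fin v p hp hv, h =>
      .fin (G.s e) (e :: p) ⟨rfl, by rw [show G.r e = v from h]; exact hp⟩
        (by show ¬ Reg G (ran G (G.r e) p); rw [show G.r e = v from h]; exact hv)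
  | .inf γ, h => .inf (γ.cons e h)

lemma Pt.src_cons (e : G.E) (pt : Pt G) (h : G.r e = pt.src) :
    (pt.cons e h).src = G.s e := by
  cases pt <;> rfl

open scoped Classical in
/-- The action of the generators on the basis. -/
noncomputable def act (K : Type) [Field K] (G : LPAGraph) : Gen G → Pt G → (Pt G →₀ K)
  | .vert v, pt => if pt.src = v then Finsupp.single pt 1 else 0
  | .edge e, pt => if h : G.r e = pt.src then Finsupp.single (pt.cons e h) 1 else 0
  | .ghost _, .fin _ [] _ _ => 0
  | .ghost e, .fin _ (f :: p) hp hv =>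
      if f = e then Finsupp.single (.fin (G.r f) p hp.2 hv) 1 else 0
  | .ghost e, .inf γ =>
      if γ.f 0 = e then
        Finsupp.single (.inf ⟨fun n => γ.f (n + 1), fun n => γ.ok (n + 1)⟩) 1 else 0

noncomputable def actE (K : Type) [Field K] (G : LPAGraph) (g : Gen G) :
    Module.End K (Pt G →₀ K) :=
  Finsupp.lift (Pt G →₀ K) K (Pt G) (act K G g)

variable (K : Type) [Field K] (G : LPAGraph)

lemma actE_single (g : Gen G) (pt : Pt G) (b : K) :
    actE K G g (Finsupp.single pt b) = b • act K G g pt := by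
  simp [actE]

noncomputable def rep0 : FreeAlgebra K (Gen G) →ₐ[K] Module.End K (Pt G →₀ K) :=
  FreeAlgebra.lift K (actE K G)

lemma rep0_iota (g : Gen G) : rep0 K G (FreeAlgebra.ι K g) = actE K G g :=
  FreeAlgebra.lift_ι_apply _ _

end LPAGraph

namespace LPAGraph

open scoped Classical

variable {G : LPAGraph}

/-- The first edge of a basis element, if any. -/
def Pt.hd : Pt G → Option G.E
  | .fin _ [] _ _ => none
  | .fin _ (f :: _) _ _ => some f
  | .inf γ => some (γ.f 0)

lemma Pt.hd_src {pt : Pt G} {g : G.E} (h : pt.hd = some g) : G.s g = pt.src := by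
  cases pt with
  | fin v p hp hv =>
      cases p with
      | nil => simp [Pt.hd] at h
      | cons f p => simp [Pt.hd] at h; subst h; exact hp.1
  | inf γ => simp [Pt.hd] at h; subst h; rfl

lemma Pt.hd_none {pt : Pt G} (h : pt.hd = none) : ¬ Reg G pt.src := by
  cases pt with
  | fin v p hp hv =>
      cases p with
      | nil => exact hv
      | cons f p => simp [Pt.hd] at h
  | inf γ => simp [Pt.hd] at h

variable (K : Type) [Field K] (G)

lemma act_vert (v : G.V) (pt : Pt G) :
    act K G (.vert v) pt = if pt.src = v then Finsupp.single pt 1 else 0 := by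
  cases pt <;> rfl

lemma act_edge (e : G.E) (pt : Pt G) :
    act K G (.edge e) pt =
      if h : G.r e = pt.src then Finsupp.single (pt.cons e h) 1 else 0 := by
  cases pt <;> rfl

variable {G}

lemma act_ghost_ne {e : G.E} {pt : Pt G} (h : pt.hd ≠ some e) :
    act K G (.ghost e) pt = 0 := by
  cases pt with
  | fin v p hp hv =>
      cases p with
      | nil => rfl
      | cons f p =>
          have : ¬ (f = e) := fun hh => h (by simp [Pt.hd, hh])
          simp [act, this]
  | inf γ =>
      have : ¬ (γ.f 0 = e) := fun hh => h (by simp [Pt.hd, hh])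
      simp [act, this]

lemma act_ghost_src_ne {e : G.E} {pt : Pt G} (h : pt.src ≠ G.s e) :
    act K G (.ghost e) pt = 0 := by
  apply act_ghost_ne
  intro hh
  exact h (Pt.hd_src hh ▸ rfl)

lemma single_one_ne_zero (pt : Pt G) : (Finsupp.single pt (1 : K)) ≠ 0 := by
  simp [Finsupp.single_eq_zero]

lemma act_ghost_src {e : G.E} {pt pt' : Pt G} (h : act K G (.ghost e) pt = Finsupp.single pt' 1) :
    pt'.src = G.r e := by
  cases pt with
  | fin v p hp hv =>
      cases p with
      | nil => exact absurd h.symm (single_one_ne_zero K pt')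
      | cons f p =>
          by_cases hf : f = e
          · subst hf
            simp only [act, if_pos rfl] at h
            have := Finsupp.single_left_injective (one_ne_zero : (1:K) ≠ 0) h
            rw [← this]
            rfl
          · simp only [act, if_neg hf] at h
            exact absurd h.symm (single_one_ne_zero K pt')
  | inf γ =>
      by_cases hf : γ.f 0 = e
      · subst hf
        simp only [act, if_pos rfl] at h
        have := Finsupp.single_left_injective (one_ne_zero : (1:K) ≠ 0) h
        rw [← this]
        show G.s (γ.f 1) = G.r (γ.f 0)
        exact (γ.ok 0).symm
      · simp only [act, if_neg hf] at h
        exact absurd h.symm (single_one_ne_zero K pt')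

lemma edge_ghost (e : G.E) (pt : Pt G) :
    actE K G (.edge e) (act K G (.ghost e) pt) =
      if pt.hd = some e then Finsupp.single pt 1 else 0 := by
  cases pt with
  | fin v p hp hv =>
      cases p with
      | nil => simp [act, Pt.hd]
      | cons f p =>
          by_cases hf : f = e
          · subst hf
            have h1 : act K G (.ghost f) (.fin v (f :: p) hp hv)
                = Finsupp.single (.fin (G.r f) p hp.2 hv) 1 := by simp [act]
            rw [h1, actE_single, one_smul, act_edge]
            have hc : G.r f = (Pt.fin (G.r f) p hp.2 hv : Pt G).src := rfl
            rw [dif_pos hc]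
            simp only [Pt.hd, if_pos rfl]
            congr 1
            show Pt.fin (G.s f) (f :: p) _ _ = _
            exact Pt.fin_congr hp.1 _ _ _ _ _
          · rw [act_ghost_ne K (by simp [Pt.hd, hf]), map_zero, if_neg (by simp [Pt.hd, hf])]
  | inf γ =>
      by_cases hf : γ.f 0 = e
      · subst hf
        have h1 : act K G (.ghost (γ.f 0)) (.inf γ)
            = Finsupp.single (.inf ⟨fun n => γ.f (n + 1), fun n => γ.ok (n + 1)⟩) 1 := by
          simp [act]
        rw [h1, actE_single, one_smul, act_edge]
        have hc : G.r (γ.f 0) =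
            (Pt.inf ⟨fun n => γ.f (n + 1), fun n => γ.ok (n + 1)⟩ : Pt G).src := γ.ok 0
        rw [dif_pos hc]
        simp only [Pt.hd, if_pos rfl]
        congr 1
        show Pt.inf _ = Pt.inf γ
        congr 1
        apply Ray.congr
        funext n
        cases n <;> rfl
      · rw [act_ghost_ne K (by simp [Pt.hd, hf]), map_zero, if_neg (by simp [Pt.hd, hf])]

lemma hd_cons (e : G.E) (pt : Pt G) (h : G.r e = pt.src) :
    (pt.cons e h).hd = some e := by
  cases pt <;> rfl

lemma act_ghost_cons (e : G.E) (pt : Pt G) (h : G.r e = pt.src) :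
    act K G (.ghost e) (pt.cons e h) = Finsupp.single pt 1 := by
  cases pt with
  | fin v p hp hv =>
      show (if e = e then _ else 0) = _
      rw [if_pos rfl]
      congr 1
      exact Pt.fin_congr h _ _ _ _ _
  | inf γ =>
      show (if e = e then _ else 0) = _
      rw [if_pos rfl]
      congr 1

lemma compat : ∀ ⦃x y : FreeAlgebra K (Gen G)⦄, Rel K G x y → rep0 K G x = rep0 K G y := by
  intro x y h
  cases h with
  | @vv u w h =>
      simp only [map_mul, map_zero, rep0_iota]
      apply Finsupp.lhom_ext
      intro pt b
      rw [Module.End.mul_apply, actE_single, map_smul, LinearMap.zero_apply]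
      refine (congrArg (b • ·) ?_).trans (smul_zero b)
      rw [act_vert]
      by_cases hc : pt.src = w
      · rw [if_pos hc, actE_single, one_smul, act_vert, if_neg (hc ▸ (Ne.symm h))]
      · rw [if_neg hc, map_zero]
  | v_idem u =>
      simp only [map_mul, rep0_iota]
      apply Finsupp.lhom_ext
      intro pt b
      rw [Module.End.mul_apply, actE_single, map_smul]
      refine congrArg (b • ·) ?_
      by_cases hc : pt.src = u <;> simp [act_vert, hc, actE_single]
  | se e =>
      simp only [map_mul, rep0_iota]
      apply Finsupp.lhom_ext
      intro pt b
      rw [Module.End.mul_apply, actE_single, map_smul]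
      refine congrArg (b • ·) ?_
      rw [act_edge]
      by_cases hc : G.r e = pt.src
      · rw [dif_pos hc, actE_single, one_smul, act_vert, if_pos (Pt.src_cons e pt hc)]
      · rw [dif_neg hc, map_zero]
  | er e =>
      simp only [map_mul, rep0_iota]
      apply Finsupp.lhom_ext
      intro pt b
      rw [Module.End.mul_apply, actE_single, map_smul, actE_single]
      refine congrArg (b • ·) ?_
      rw [act_vert]
      by_cases hc : pt.src = G.r e
      · rw [if_pos hc, actE_single, one_smul]
      · rw [if_neg hc, map_zero, act_edge, dif_neg (fun hh => hc hh.symm)]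
  | rg e =>
      simp only [map_mul, rep0_iota]
      apply Finsupp.lhom_ext
      intro pt b
      rw [Module.End.mul_apply, actE_single, map_smul]
      refine congrArg (b • ·) ?_
      cases pt with
      | fin v p hp hv =>
          cases p with
          | nil =>
              rw [show act K G (Gen.ghost e) (Pt.fin v [] hp hv) = 0 from rfl, map_zero]
          | cons f p =>
              by_cases hf : f = e
              · subst hf
                have h1 : act K G (Gen.ghost f) (Pt.fin v (f :: p) hp hv)
                    = Finsupp.single (Pt.fin (G.r f) p hp.2 hv) 1 := by simp [act]
                rw [h1, actE_single, one_smul, act_vert,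
                  if_pos (show (Pt.fin (G.r f) p hp.2 hv : Pt G).src = G.r f from rfl)]
              · have h0 : act K G (Gen.ghost e) (Pt.fin v (f :: p) hp hv) = 0 := by
                  simp [act, hf]
                rw [h0, map_zero]
      | inf γ =>
          by_cases hf : γ.f 0 = e
          · subst hf
            have h1 : act K G (Gen.ghost (γ.f 0)) (Pt.inf γ)
                = Finsupp.single
                    (Pt.inf ⟨fun n => γ.f (n + 1), fun n => γ.ok (n + 1)⟩) 1 := by
              simp [act]
            rw [h1, actE_single, one_smul, act_vert,
              if_pos (show (Pt.inf ⟨fun n => γ.f (n + 1), fun n => γ.ok (n + 1)⟩ :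
                Pt G).src = G.r (γ.f 0) from (γ.ok 0).symm)]
          · have h0 : act K G (Gen.ghost e) (Pt.inf γ) = 0 := by simp [act, hf]
            rw [h0, map_zero]
  | gs e =>
      simp only [map_mul, rep0_iota]
      apply Finsupp.lhom_ext
      intro pt b
      rw [Module.End.mul_apply, actE_single, map_smul, actE_single]
      refine congrArg (b • ·) ?_
      rw [act_vert]
      by_cases hc : pt.src = G.s e
      · rw [if_pos hc, actE_single, one_smul]
      · rw [if_neg hc, map_zero, act_ghost_src_ne K hc]
  | @ck1_ne e f h =>
      simp only [map_mul, map_zero, rep0_iota]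
      apply Finsupp.lhom_ext
      intro pt b
      rw [Module.End.mul_apply, actE_single, map_smul, LinearMap.zero_apply]
      refine (congrArg (b • ·) ?_).trans (smul_zero b)
      rw [act_edge]
      by_cases hc : G.r f = pt.src
      · rw [dif_pos hc, actE_single, one_smul]
        apply act_ghost_ne
        rw [hd_cons]
        intro hh
        exact h (Option.some_injective _ hh).symm
      · rw [dif_neg hc, map_zero]
  | ck1 e =>
      simp only [map_mul, rep0_iota]
      apply Finsupp.lhom_ext
      intro pt b
      rw [Module.End.mul_apply, actE_single, map_smul, actE_single]
      refine congrArg (b • ·) ?_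
      rw [act_edge]
      by_cases hc : G.r e = pt.src
      · rw [dif_pos hc, actE_single, one_smul, act_ghost_cons, act_vert, if_pos hc.symm]
      · rw [dif_neg hc, map_zero, act_vert, if_neg (fun hh => hc hh.symm)]
  | ck2 v hfin hne =>
      rw [map_sum]
      simp only [map_mul, rep0_iota]
      apply Finsupp.lhom_ext
      intro pt b
      rw [LinearMap.sum_apply, actE_single]
      have hterm : ∀ e ∈ hfin.toFinset,
          (actE K G (.edge e) * actE K G (.ghost e)) (Finsupp.single pt b)
            = b • (if pt.hd = some e then Finsupp.single pt 1 else 0) := by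
        intro e _
        rw [Module.End.mul_apply, actE_single, map_smul, edge_ghost]
      rw [Finset.sum_congr rfl hterm, ← Finset.smul_sum]
      refine congrArg (b • ·) ?_
      rw [act_vert]
      cases hh : pt.hd with
      | none =>
          rw [if_neg (fun hc => Pt.hd_none hh (by rw [hc]; exact ⟨hfin, hne⟩))]
          refine (Finset.sum_eq_zero ?_).symm
          intro e _
          exact if_neg (fun hx => by cases hx)
      | some g =>
          have hsg : G.s g = pt.src := Pt.hd_src hh
          have hcongr : ∀ e ∈ hfin.toFinset,
              (if some g = some e then (Finsupp.single pt 1 : Pt G →₀ K) else 0)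
                = if g = e then Finsupp.single pt 1 else 0 := by
            intro e _
            simp only [Option.some.injEq]
          refine Eq.symm ((Finset.sum_congr rfl hcongr).trans ?_)
          rw [Finset.sum_ite_eq]
          have hmem : g ∈ hfin.toFinset ↔ pt.src = v := by
            rw [Set.Finite.mem_toFinset]
            exact ⟨fun hgv => hsg ▸ hgv, fun hv' => by show G.s g = v; rw [hsg, hv']⟩
          by_cases hv' : pt.src = v
          · rw [if_pos hv', if_pos (hmem.2 hv')]
          · rw [if_neg hv', if_neg (fun hg => hv' (hmem.1 hg))]

end LPAGraph

namespace LPAGraph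

variable (K : Type) [Field K] (G : LPAGraph)

noncomputable def rep : L K G →ₐ[K] Module.End K (Pt G →₀ K) :=
  RingQuot.liftAlgHom K ⟨rep0 K G, compat (G := G) K⟩

lemma rep_mk (a : FreeAlgebra K (Gen G)) :
    rep K G (RingQuot.mkRingHom (Rel K G) a) = rep0 K G a := by
  have h : RingQuot.mkRingHom (Rel K G) a = RingQuot.mkAlgHom K (Rel K G) a := by
    rw [← RingQuot.mkAlgHom_coe K (Rel K G)]; rfl
  rw [h]; exact RingQuot.liftAlgHom_mkAlgHom_apply _ _ _ _

variable {G}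

lemma vert_ne_zero {x : G.V} (hpt : ∃ pt : Pt G, pt.src = x) : vert K G x ≠ 0 := by
  obtain ⟨pt, hpt⟩ := hpt
  intro h
  have h2 := congrArg (rep K G) h
  rw [vert, rep_mk, rep0_iota, map_zero] at h2
  have h3 := congrArg (fun F : Module.End K (Pt G →₀ K) => F (Finsupp.single pt 1)) h2
  simp only [LinearMap.zero_apply] at h3
  rw [actE_single, one_smul, act_vert, if_pos hpt] at h3
  exact single_one_ne_zero K pt h3

lemma ok_append {x : G.V} {p : List G.E} {e : G.E} (hp : Ok G x p) (he : G.s e = ran G x p) :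
    Ok G x (p ++ [e]) := by
  induction p generalizing x with
  | nil => exact ⟨he, trivial⟩
  | cons f p ih => exact ⟨hp.1, ih hp.2 he⟩

lemma ran_append {x : G.V} {p : List G.E} {e : G.E} :
    ran G x (p ++ [e]) = G.r e := by
  induction p generalizing x with
  | nil => rfl
  | cons f p ih => exact ih

lemma exists_pt (x : G.V) : ∃ pt : Pt G, pt.src = x := by
  by_cases hx : ∃ p : List G.E, ∃ h : Ok G x p, ¬ Reg G (ran G x p)
  · obtain ⟨p, h, hv⟩ := hx
    exact ⟨.fin x p h hv, rfl⟩
  · push_neg at hx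
    choose pick hpick using fun (q : {p : List G.E // Ok G x p}) => (hx q.1 q.2).2
    have hpick' : ∀ q : {p : List G.E // Ok G x p},
        G.s (pick q) = ran G x q.1 := fun q => hpick q
    let seq : ℕ → {p : List G.E // Ok G x p} := fun n =>
      Nat.rec ⟨[], trivial⟩
        (fun _ q => ⟨q.1 ++ [pick q], ok_append q.2 (hpick' q)⟩) n
    refine ⟨.inf ⟨fun n => pick (seq n), fun n => ?_⟩, ?_⟩
    · show G.r (pick (seq n)) = G.s (pick (seq (n + 1)))
      rw [hpick' (seq (n + 1))]
      show G.r (pick (seq n)) = ran G x ((seq n).1 ++ [pick (seq n)])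
      rw [ran_append]
    · show G.s (pick (seq 0)) = x
      rw [hpick' (seq 0)]
      rfl

end LPAGraph

namespace LPAGraph

variable {K : Type} [Field K] {G : LPAGraph}

lemma mono_head {m : L K G} (hm : m ∈ monoSet K G 1) :
    ∃ h : G.E, ∀ f : G.E, f ≠ h → ghost K G f * m = 0 := by
  obtain ⟨p, q, v, _, _, _, _, hlen, rfl⟩ := hm
  cases p with
  | nil =>
      exfalso
      simp only [List.length_nil, Nat.cast_zero] at hlen
      omega
  | cons h p' =>
      refine ⟨h, fun f hf => ?_⟩
      rw [pathProd_cons]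
      simp only [← mul_assoc]
      rw [ghost_mul_edge_ne hf, zero_mul, zero_mul, zero_mul]

lemma ghost_mul_sum [Fintype G.V] (f : G.E) :
    ghost K G f * (Finset.univ.sum fun v : G.V => vert K G v) = ghost K G f := by
  rw [Finset.mul_sum, Finset.sum_eq_single (G.s f)]
  · exact ghost_mul_vert f
  · intro b _ hb
    exact ghost_mul_vert_ne hb
  · intro h
    exact absurd (Finset.mem_univ _) h

end LPAGraph

open LPAGraph in
/-- If a graph `E` has finitely many vertices and its (unital) Leavitt path
algebra, with identity `Σ_{v ∈ E⁰} v`, is graded unit-regular, then `E` is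
row-finite. -/
theorem stmt_18 (K : Type) [Field K] (G : LPAGraph) [Fintype G.V]
    (hUR : ∀ n : ℤ, ∀ x ∈ component K G n, ∃ u ∈ component K G (-n),
      (∃ w ∈ lpa K G,
        u * w = (Finset.univ.sum fun v : G.V => vert K G v) ∧
        w * u = (Finset.univ.sum fun v : G.V => vert K G v)) ∧
      x * u * x = x) :
    ∀ v : G.V, {e : G.E | G.s e = v}.Finite := by
  classical
  intro v
  by_contra hinf
  obtain ⟨u, hu, ⟨w, hw, -, hwu⟩, -⟩ := hUR 1 0 (Submodule.zero_mem _)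
  set S : L K G := Finset.univ.sum fun v : G.V => vert K G v with hS
  -- the degree-one part `w'` of `w` is still a left inverse for `u`
  have hw1 : (phi K G w).coeff 1 ∈ component K G 1 := coeff_one_mem K G hw
  have hphiu : phi K G u = AddMonoidAlgebra.single (-1) u := phi_component K G hu
  have keyS : phi K G S = AddMonoidAlgebra.single 0 S := by
    rw [hS, map_sum]
    simp only [phi_vert]
    rw [← amsingle_finset_sum]
  have hwu' : (phi K G w).coeff 1 * u = S := by
    have h1 := congrArg (phi K G) hwu
    rw [map_mul, hphiu, keyS] at h1
    have h2 := congrArg (fun x : AddMonoidAlgebra (L K G) ℤ => x.coeff 0) h1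
    rw [AddMonoidAlgebra.coeff_mul_single_apply, show (0 : ℤ) + - (-1) = 1 by norm_num,
      AddMonoidAlgebra.coeff_single, Finsupp.single_eq_same] at h2
    exact h2
  -- write `w'` as a finite combination of degree-one monomials
  have hw1' : (phi K G w).coeff 1 ∈ Submodule.span K (monoSet K G 1) := hw1
  obtain ⟨c, hsupp, hc⟩ := Submodule.mem_span_set.mp hw1'
  have hkey : ∀ m ∈ c.support, ∃ h : G.E, ∀ f : G.E, f ≠ h → ghost K G f * m = 0 :=
    fun m hm => mono_head (hsupp hm)
  choose Hd hHd using hkey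
  -- choose an edge emitted by `v` different from all heads
  let heads : Finset G.E := c.support.attach.image fun m => Hd m.1 m.2
  have hex : ∃ a ∈ {e : G.E | G.s e = v}, a ∉ heads :=
    Set.Infinite.exists_notMem_finset
      (show Set.Infinite {e : G.E | G.s e = v} from hinf) heads
  obtain ⟨f, hfv, hf⟩ := hex
  have hgw : ghost K G f * (phi K G w).coeff 1 = 0 := by
    rw [← hc, Finsupp.sum, Finset.mul_sum]
    apply Finset.sum_eq_zero
    intro m hm
    rw [mul_smul_comm, hHd m hm f ?_, smul_zero]
    intro hfe
    exact hf (Finset.mem_image.mpr ⟨⟨m, hm⟩, Finset.mem_attach _ _, hfe.symm⟩)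
  have hgf : ghost K G f = 0 := by
    calc ghost K G f = ghost K G f * S := (ghost_mul_sum f).symm
      _ = ghost K G f * ((phi K G w).coeff 1 * u) := by rw [hwu']
      _ = (ghost K G f * (phi K G w).coeff 1) * u := by rw [mul_assoc]
      _ = 0 := by rw [hgw, zero_mul]
  have hvrf : vert K G (G.r f) = 0 := by rw [← ghost_mul_edge f, hgf, zero_mul]
  exact vert_ne_zero K (exists_pt (G.r f)) hvrf
end
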